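/- (Universal exponential consistency in Theorem 2.) Fix M ≥ 3 and full-support probability distributions μ ≠ π on 𝒴. Then V*(M) > 0, where V*(M) is the minimum of D(q_1‖μ) + D(q_2‖π) + … + D(q_M‖π) over all M-tuples of probability distributions (q_1,…,q_M) on 𝒴 satisfying Σ_{j≠1} D( q_j ‖ (Σ_{k≠1} q_k)/(M−1) ) ≥ Σ_{j≠2} D( q_j ‖ (Σ_{k≠2} q_k)/(M−1) ). -/
import Mathlib


open Filter Finset Topology

noncomputable section

/-- `p` is a probability distribution on the finite alphabet. -/
def IsProb {𝓨 : Type} [Fintype 𝓨] (p : 𝓨 → ℝ) : Prop :=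
  (∀ y, 0 ≤ p y) ∧ ∑ y, p y = 1

/-- `p` has full support. -/
def FullSupport {𝓨 : Type} (p : 𝓨 → ℝ) : Prop := ∀ y, 0 < p y

/-- Relative entropy `D(q‖p)` (natural log, convention `0·log 0 = 0`,
which holds since `Real.log 0 = 0` in Mathlib). -/
def KL {𝓨 : Type} [Fintype 𝓨] (q p : 𝓨 → ℝ) : ℝ :=
  ∑ y, q y * Real.log (q y / p y)

/-- The feasible values of the optimization problem in Theorem 2: tuples
`(q_1, …, q_M)` of distributions (indexed here by `0, …, M-1`) satisfying
`∑_{j≠1} D(q_j ‖ (∑_{k≠1} q_k)/(M-1)) ≥ ∑_{j≠2} D(q_j ‖ (∑_{k≠2} q_k)/(M-1))`,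
with objective `D(q_1‖μ) + D(q_2‖π) + … + D(q_M‖π)`. -/
def VstarSet {𝓨 : Type} [Fintype 𝓨] (μ π : 𝓨 → ℝ) (M : ℕ) : Set ℝ :=
  {x | ∃ q : ℕ → 𝓨 → ℝ, (∀ j < M, IsProb (q j)) ∧
    (∑ j ∈ Finset.range M \ {0}, KL (q j)
        (fun a => (∑ k ∈ Finset.range M \ {0}, q k a) / ((M : ℝ) - 1)) ≥
     ∑ j ∈ Finset.range M \ {1}, KL (q j)
        (fun a => (∑ k ∈ Finset.range M \ {1}, q k a) / ((M : ℝ) - 1))) ∧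
    x = KL (q 0) μ + ∑ j ∈ Finset.range M \ {0}, KL (q j) π}

/-! ### Auxiliary material -/

/-- `x log x`. -/
def phi (x : ℝ) : ℝ := x * Real.log x

lemma continuous_phi : Continuous phi := Real.continuous_mul_log

/-- pointwise Gibbs inequality with equality case. -/
lemma point_ineq {a b : ℝ} (ha : 0 < a) (hb : 0 < b) :
    a - b ≤ a * Real.log (a / b) ∧ (a * Real.log (a / b) = a - b → a = b) := by
  have hlog : Real.log (a / b) = - Real.log (b / a) := by
    rw [← Real.log_inv, inv_div]
  have h4 : a * (b / a - 1) = b - a := by field_simp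
  constructor
  · have h := Real.log_le_sub_one_of_pos (show 0 < b / a by positivity)
    have h3 := mul_le_mul_of_nonneg_left h ha.le
    rw [hlog]; nlinarith
  · intro h
    by_contra hab
    have hne : b / a ≠ 1 := by
      intro h1
      rw [div_eq_one_iff_eq (ne_of_gt ha)] at h1
      exact hab h1.symm
    have h2 := Real.log_lt_sub_one_of_pos (show 0 < b / a by positivity) hne
    have h3 := mul_lt_mul_of_pos_left h2 ha
    rw [hlog] at h; nlinarith

lemma isprob_le_one {𝓨 : Type} [Fintype 𝓨] {p : 𝓨 → ℝ} (hp : IsProb p) (y : 𝓨) :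
    p y ≤ 1 := by
  rw [← hp.2]
  exact Finset.single_le_sum (fun i _ => hp.1 i) (Finset.mem_univ y)

lemma kl_self {𝓨 : Type} [Fintype 𝓨] (p : 𝓨 → ℝ) : KL p p = 0 := by
  unfold KL
  refine Finset.sum_eq_zero fun y _ => ?_
  rcases eq_or_ne (p y) 0 with h | h
  · simp [h]
  · rw [div_self h, Real.log_one, mul_zero]

/-- Gibbs' inequality with equality case. -/
lemma kl_nonneg_and {𝓨 : Type} [Fintype 𝓨] {q p : 𝓨 → ℝ} (hq : IsProb q)
    (hp : IsProb p) (hpf : FullSupport p) :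
    0 ≤ KL q p ∧ (KL q p = 0 → q = p) := by
  classical
  set s : Finset 𝓨 := Finset.univ.filter (fun y => 0 < q y) with hs
  have hq0 : ∀ y, y ∉ s → q y = 0 := by
    intro y hy
    simp only [hs, Finset.mem_filter, Finset.mem_univ, true_and, not_lt] at hy
    exact le_antisymm hy (hq.1 y)
  have hKLs : KL q p = ∑ y ∈ s, q y * Real.log (q y / p y) := by
    unfold KL
    refine (Finset.sum_subset (Finset.filter_subset _ _) ?_).symm
    intro y _ hy
    rw [hq0 y hy, zero_mul]
  have hqs : ∑ y ∈ s, q y = 1 := by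
    rw [← hq.2]
    refine Finset.sum_subset (Finset.filter_subset _ _) ?_
    intro y _ hy; exact hq0 y hy
  have hps : ∑ y ∈ s, p y ≤ 1 := by
    rw [← hp.2]
    exact Finset.sum_le_sum_of_subset_of_nonneg (Finset.filter_subset _ _)
      (fun y _ _ => hp.1 y)
  have hterm : ∀ y ∈ s, q y - p y ≤ q y * Real.log (q y / p y) := by
    intro y hy
    simp only [hs, Finset.mem_filter, Finset.mem_univ, true_and] at hy
    exact (point_ineq hy (hpf y)).1
  have hsum_ge : ∑ y ∈ s, (q y - p y) ≤ ∑ y ∈ s, q y * Real.log (q y / p y) :=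
    Finset.sum_le_sum hterm
  have hdiff : ∑ y ∈ s, (q y - p y) = 1 - ∑ y ∈ s, p y := by
    rw [Finset.sum_sub_distrib, hqs]
  have hnn : 0 ≤ KL q p := by rw [hKLs]; linarith
  refine ⟨hnn, fun hzero => ?_⟩
  -- equality case
  have hps1 : ∑ y ∈ s, p y = 1 := by
    rw [hKLs] at hzero; linarith
  have hsuniv : s = Finset.univ := by
    by_contra h
    obtain ⟨y, hy⟩ : ∃ y, y ∉ s := by
      by_contra h2
      push_neg at h2
      exact h (Finset.eq_univ_of_forall h2)
    have : ∑ y ∈ s, p y < ∑ y, p y :=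
      Finset.sum_lt_sum_of_subset (Finset.subset_univ s) (Finset.mem_univ y) hy
        (hpf y) (fun i _ _ => hp.1 i)
    rw [hps1, hp.2] at this
    exact lt_irrefl _ this
  have hqpos : ∀ y, 0 < q y := by
    intro y
    have : y ∈ s := hsuniv ▸ Finset.mem_univ y
    simpa [hs] using this
  -- each term equals q y - p y
  have hall : ∀ y ∈ s, q y * Real.log (q y / p y) - (q y - p y) = 0 := by
    have hsum0 : ∑ y ∈ s, (q y * Real.log (q y / p y) - (q y - p y)) = 0 := by
      rw [Finset.sum_sub_distrib, hdiff, hps1, ← hKLs, hzero]; ring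
    intro y hy
    refine (Finset.sum_eq_zero_iff_of_nonneg ?_).1 hsum0 y hy
    intro i hi
    have := hterm i hi
    linarith
  funext y
  have hy : y ∈ s := hsuniv ▸ Finset.mem_univ y
  have := hall y hy
  exact (point_ineq (hqpos y) (hpf y)).2 (by linarith)

lemma kl_nonneg {𝓨 : Type} [Fintype 𝓨] {q p : 𝓨 → ℝ} (hq : IsProb q)
    (hp : IsProb p) (hpf : FullSupport p) : 0 ≤ KL q p :=
  (kl_nonneg_and hq hp hpf).1

/-- `KL` with a positive reference measure, in `phi` form. -/
lemma kl_eq_phi {𝓨 : Type} [Fintype 𝓨] (q p : 𝓨 → ℝ) (hq : ∀ y, 0 ≤ q y)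
    (hp : ∀ y, 0 < p y) :
    KL q p = ∑ y, (phi (q y) - q y * Real.log (p y)) := by
  unfold KL phi
  refine Finset.sum_congr rfl fun y _ => ?_
  rcases eq_or_lt_of_le (hq y) with h | h
  · simp [← h]
  · rw [Real.log_div (ne_of_gt h) (ne_of_gt (hp y))]; ring

/-- Sum of `KL`'s against the normalized average, in `phi` form. -/
lemma sum_kl_avg {𝓨 : Type} [Fintype 𝓨] (A : Finset ℕ) (q : ℕ → 𝓨 → ℝ)
    (hq : ∀ j ∈ A, ∀ y, 0 ≤ q j y) {c : ℝ} (hc : 0 < c) :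
    ∑ j ∈ A, KL (q j) (fun a => (∑ k ∈ A, q k a) / c)
      = ∑ y, ((∑ j ∈ A, phi (q j y)) - phi (∑ j ∈ A, q j y)
          + (∑ j ∈ A, q j y) * Real.log c) := by
  unfold KL
  rw [Finset.sum_comm]
  refine Finset.sum_congr rfl fun y _ => ?_
  have key : ∀ j ∈ A, q j y * Real.log (q j y / ((∑ k ∈ A, q k y) / c))
      = phi (q j y) - q j y * Real.log (∑ k ∈ A, q k y) + q j y * Real.log c := by
    intro j hj
    rcases eq_or_lt_of_le (hq j hj y) with h | h
    · simp [phi, ← h]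
    · have hS : 0 < ∑ k ∈ A, q k y :=
        lt_of_lt_of_le h (Finset.single_le_sum (fun k hk => hq k hk y) hj)
      rw [div_div_eq_mul_div, Real.log_div (by positivity) (ne_of_gt hS),
        Real.log_mul (ne_of_gt h) (ne_of_gt hc)]
      unfold phi; ring
  rw [Finset.sum_congr rfl key, Finset.sum_add_distrib, Finset.sum_sub_distrib,
    ← Finset.sum_mul, ← Finset.sum_mul]
  unfold phi
  ring

/-- Continuous objective surrogate. -/
def objF {𝓨 : Type} [Fintype 𝓨] (μ π : 𝓨 → ℝ) (M : ℕ) (q : ℕ → 𝓨 → ℝ) : ℝ :=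
  (∑ y, (phi (q 0 y) - q 0 y * Real.log (μ y))) +
  ∑ j ∈ Finset.range M \ {0}, ∑ y, (phi (q j y) - q j y * Real.log (π y))

/-- Continuous constraint surrogate. -/
def conF {𝓨 : Type} [Fintype 𝓨] (M : ℕ) (A : Finset ℕ) (q : ℕ → 𝓨 → ℝ) : ℝ :=
  ∑ y, ((∑ j ∈ A, phi (q j y)) - phi (∑ j ∈ A, q j y)
      + (∑ j ∈ A, q j y) * Real.log ((M : ℝ) - 1))

lemma continuous_eval {𝓨 : Type} [Fintype 𝓨] (j : ℕ) (y : 𝓨) :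
    Continuous fun q : ℕ → 𝓨 → ℝ => q j y :=
  (continuous_apply y).comp (continuous_apply j)

lemma continuous_objF {𝓨 : Type} [Fintype 𝓨] (μ π : 𝓨 → ℝ) (M : ℕ) :
    Continuous (objF μ π M) := by
  apply Continuous.add
  · exact continuous_finset_sum _ fun y _ =>
      (continuous_phi.comp (continuous_eval 0 y)).sub
        ((continuous_eval 0 y).mul continuous_const)
  · exact continuous_finset_sum _ fun j _ => continuous_finset_sum _ fun y _ =>
      (continuous_phi.comp (continuous_eval j y)).sub
        ((continuous_eval j y).mul continuous_const)

lemma continuous_conF {𝓨 : Type} [Fintype 𝓨] (M : ℕ) (A : Finset ℕ) :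
    Continuous (conF (𝓨 := 𝓨) M A) := by
  apply continuous_finset_sum
  intro y _
  have hS : Continuous fun q : ℕ → 𝓨 → ℝ => ∑ j ∈ A, q j y :=
    continuous_finset_sum _ fun j _ => continuous_eval j y
  exact ((continuous_finset_sum _ fun j _ =>
    continuous_phi.comp (continuous_eval j y)).sub (continuous_phi.comp hS)).add
    (hS.mul continuous_const)

/-- universal exponential consistency in Theorem 2.
For every `M ≥ 3` and full-support `μ ≠ π`, the minimum `V*(M)` of the
optimization problem in Theorem 2 is strictly positive. -/
theorem statement9 (𝓨 : Type) [Fintype 𝓨] [Nonempty 𝓨]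
    (M : ℕ) (hM : 3 ≤ M)
    (μ π : 𝓨 → ℝ) (hμ : IsProb μ) (hπ : IsProb π)
    (hμf : FullSupport μ) (hπf : FullSupport π) (hne : μ ≠ π) :
    ∃ V : ℝ, IsLeast (VstarSet μ π M) V ∧ 0 < V := by
  classical
  set A0 : Finset ℕ := Finset.range M \ {0} with hA0
  set A1 : Finset ℕ := Finset.range M \ {1} with hA1
  have hA0sub : A0 ⊆ Finset.range M := Finset.sdiff_subset
  have hA1sub : A1 ⊆ Finset.range M := Finset.sdiff_subset
  have hMR : (3 : ℝ) ≤ (M : ℝ) := by exact_mod_cast hM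
  have hc : (0 : ℝ) < (M : ℝ) - 1 := by linarith
  have hcardA0 : A0.card = M - 1 := by
    rw [hA0, Finset.card_sdiff_of_subset (by simp [Finset.singleton_subset_iff]; omega)]
    simp
  have hcardA1 : A1.card = M - 1 := by
    rw [hA1, Finset.card_sdiff_of_subset (by simp [Finset.singleton_subset_iff]; omega)]
    simp
  have hcast1 : ((M - 1 : ℕ) : ℝ) = (M : ℝ) - 1 := by
    have : 1 ≤ M := by omega
    push_cast [this]; ring
  -- the feasible set
  set K : Set (ℕ → 𝓨 → ℝ) := {q | (∀ j < M, IsProb (q j)) ∧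
    conF M A1 q ≤ conF M A0 q ∧ ∀ j, M ≤ j → q j = π} with hK
  -- membership characterization of VstarSet via K
  have hconKL : ∀ (q : ℕ → 𝓨 → ℝ) (A : Finset ℕ), A ⊆ Finset.range M →
      (∀ j < M, IsProb (q j)) →
      ∑ j ∈ A, KL (q j) (fun a => (∑ k ∈ A, q k a) / ((M : ℝ) - 1)) = conF M A q := by
    intro q A hA hprob
    exact sum_kl_avg A q (fun j hj y =>
      (hprob j (Finset.mem_range.1 (hA hj))).1 y) hc
  have hobjKL : ∀ (q : ℕ → 𝓨 → ℝ), (∀ j < M, IsProb (q j)) →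
      KL (q 0) μ + ∑ j ∈ A0, KL (q j) π = objF μ π M q := by
    intro q hprob
    unfold objF
    rw [kl_eq_phi (q 0) μ (hprob 0 (by omega)).1 hμf]
    congr 1
    refine Finset.sum_congr rfl fun j hj => ?_
    exact kl_eq_phi (q j) π (hprob j (Finset.mem_range.1 (hA0sub hj))).1 hπf
  have hset : VstarSet μ π M = objF μ π M '' K := by
    ext x
    constructor
    · rintro ⟨q, h1, h2, h3⟩
      set q' : ℕ → 𝓨 → ℝ := fun j => if j < M then q j else π with hq'
      have hq'range : ∀ j ∈ Finset.range M, q' j = q j := fun j hj => by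
        simp [hq', Finset.mem_range.1 hj]
      have hq'prob : ∀ j < M, IsProb (q' j) := fun j hj => by
        rw [hq'range j (Finset.mem_range.2 hj)]; exact h1 j hj
      have hKLsum : ∀ (A : Finset ℕ), A ⊆ Finset.range M →
          ∑ j ∈ A, KL (q' j) (fun a => (∑ k ∈ A, q' k a) / ((M : ℝ) - 1))
          = ∑ j ∈ A, KL (q j) (fun a => (∑ k ∈ A, q k a) / ((M : ℝ) - 1)) := by
        intro A hA
        refine Finset.sum_congr rfl fun j hj => ?_
        rw [hq'range j (hA hj)]
        congr 1
        funext a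
        congr 1
        exact Finset.sum_congr rfl fun k hk => by rw [hq'range k (hA hk)]
      refine ⟨q', ⟨hq'prob, ?_, ?_⟩, ?_⟩
      · rw [← hconKL q' A1 hA1sub hq'prob, ← hconKL q' A0 hA0sub hq'prob,
          hKLsum A1 hA1sub, hKLsum A0 hA0sub]
        exact h2
      · intro j hj; simp [hq', not_lt.2 hj]
      · rw [← hobjKL q' hq'prob, h3, hq'range 0 (Finset.mem_range.2 (by omega))]
        congr 1
        exact (Finset.sum_congr rfl fun j hj => by rw [hq'range j (hA0sub hj)]).symm
    · rintro ⟨q, ⟨h1, h2, _⟩, rfl⟩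
      refine ⟨q, h1, ?_, ?_⟩
      · rw [hconKL q A1 hA1sub h1, hconKL q A0 hA0sub h1]; exact h2
      · exact (hobjKL q h1).symm
  -- K is compact
  have hKclosed : IsClosed K := by
    have h1 : IsClosed {q : ℕ → 𝓨 → ℝ | ∀ j < M, IsProb (q j)} := by
      have : {q : ℕ → 𝓨 → ℝ | ∀ j < M, IsProb (q j)} =
          ⋂ j, ⋂ (_ : j < M),
            ((⋂ y, {q : ℕ → 𝓨 → ℝ | 0 ≤ q j y}) ∩ {q | ∑ y, q j y = 1}) := by
        ext q
        simp only [Set.mem_setOf_eq, Set.mem_iInter, Set.mem_inter_iff, IsProb]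
      rw [this]
      exact isClosed_iInter fun j => isClosed_iInter fun _ =>
        ((isClosed_iInter fun y =>
          isClosed_le continuous_const (continuous_eval j y)).inter
          (isClosed_eq (continuous_finset_sum _ fun y _ => continuous_eval j y)
            continuous_const))
    have h2 : IsClosed {q : ℕ → 𝓨 → ℝ | conF M A1 q ≤ conF M A0 q} :=
      isClosed_le (continuous_conF M A1) (continuous_conF M A0)
    have h3 : IsClosed {q : ℕ → 𝓨 → ℝ | ∀ j, M ≤ j → q j = π} := by
      have : {q : ℕ → 𝓨 → ℝ | ∀ j, M ≤ j → q j = π} =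
          ⋂ j, ⋂ (_ : M ≤ j), {q : ℕ → 𝓨 → ℝ | q j = π} := by
        ext q; simp only [Set.mem_setOf_eq, Set.mem_iInter]
      rw [this]
      exact isClosed_iInter fun j => isClosed_iInter fun _ =>
        isClosed_eq (continuous_apply j) continuous_const
    have hKeq : K = {q : ℕ → 𝓨 → ℝ | ∀ j < M, IsProb (q j)} ∩
        ({q | conF M A1 q ≤ conF M A0 q} ∩ {q | ∀ j, M ≤ j → q j = π}) := by
      rw [hK]; ext q
      simp only [Set.mem_setOf_eq, Set.mem_inter_iff]
    rw [hKeq]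
    exact h1.inter (h2.inter h3)
  have hKcomp : IsCompact K := by
    have hT : IsCompact (Set.pi Set.univ fun _ : ℕ =>
        Set.pi Set.univ fun _ : 𝓨 => Set.Icc (-1 : ℝ) 1) :=
      isCompact_univ_pi fun _ => isCompact_univ_pi fun _ => isCompact_Icc
    refine hT.of_isClosed_subset hKclosed ?_
    rintro q ⟨h1, _, h3⟩
    simp only [Set.mem_univ_pi]
    intro j y
    by_cases hj : j < M
    · have hp := h1 j hj
      exact ⟨by linarith [hp.1 y], isprob_le_one hp y⟩
    · rw [h3 j (not_lt.1 hj)]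
      exact ⟨by linarith [hπ.1 y], isprob_le_one hπ y⟩
  -- K is nonempty
  have hqπ : (fun _ : ℕ => π) ∈ K := by
    refine ⟨fun j _ => hπ, le_of_eq ?_, fun j _ => rfl⟩
    unfold conF
    refine Finset.sum_congr rfl fun y _ => ?_
    simp [Finset.sum_const, hcardA0, hcardA1]
  obtain ⟨V, hVleast⟩ :=
    (hKcomp.image (continuous_objF μ π M)).exists_isLeast
      ⟨_, Set.mem_image_of_mem _ hqπ⟩
  refine ⟨V, hset ▸ hVleast, ?_⟩
  -- positivity
  have hVmem : V ∈ VstarSet μ π M := by rw [hset]; exact hVleast.1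
  simp only [VstarSet, Set.mem_setOf_eq] at hVmem
  obtain ⟨q, h1, h2, h3⟩ := hVmem
  rw [← hA0, ← hA1] at h2
  rw [← hA0] at h3
  have hprob0 : IsProb (q 0) := h1 0 (by omega)
  have hnn0 : 0 ≤ KL (q 0) μ := kl_nonneg hprob0 hμ hμf
  have hnnj : ∀ j ∈ A0, 0 ≤ KL (q j) π := fun j hj =>
    kl_nonneg (h1 j (Finset.mem_range.1 (hA0sub hj))) hπ hπf
  have hsumnn : 0 ≤ ∑ j ∈ A0, KL (q j) π := Finset.sum_nonneg hnnj
  have hVnn : 0 ≤ V := by rw [h3]; linarith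
  rcases eq_or_lt_of_le hVnn with hV0 | hVpos
  swap
  · exact hVpos
  exfalso
  rw [← hV0] at h3
  have hKL0 : KL (q 0) μ = 0 := by linarith
  have hsum0 : ∑ j ∈ A0, KL (q j) π = 0 := by linarith
  have hq0 : q 0 = μ := (kl_nonneg_and hprob0 hμ hμf).2 hKL0
  have hqj : ∀ j ∈ A0, q j = π := by
    intro j hj
    have hz := (Finset.sum_eq_zero_iff_of_nonneg hnnj).1 hsum0 j hj
    exact (kl_nonneg_and (h1 j (Finset.mem_range.1 (hA0sub hj))) hπ hπf).2 hz
  -- the A0-side of the constraint is zero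
  have hfun0 : (fun a => (∑ k ∈ A0, q k a) / ((M : ℝ) - 1)) = π := by
    funext a
    have hsa : ∑ k ∈ A0, q k a = ((M : ℝ) - 1) * π a := by
      rw [Finset.sum_congr rfl fun k hk => by rw [hqj k hk],
        Finset.sum_const, hcardA0, nsmul_eq_mul, hcast1]
    rw [hsa, mul_div_cancel_left₀ _ (ne_of_gt hc)]
  have hLHS : ∑ j ∈ A0, KL (q j)
      (fun a => (∑ k ∈ A0, q k a) / ((M : ℝ) - 1)) = 0 := by
    rw [hfun0]
    refine Finset.sum_eq_zero fun j hj => ?_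
    rw [hqj j hj]
    exact kl_self π
  -- the A1-side of the constraint is at least KL μ ρ > 0
  have hM2 : (0 : ℝ) < (M : ℝ) - 2 := by linarith
  have h0A1 : 0 ∈ A1 := by
    rw [hA1, Finset.mem_sdiff]
    simp only [Finset.mem_range, Finset.mem_singleton]
    omega
  have hcard_erase : (A1.erase 0).card = M - 2 := by
    rw [Finset.card_erase_of_mem h0A1, hcardA1]
    omega
  have hcast2 : ((M - 2 : ℕ) : ℝ) = (M : ℝ) - 2 := by
    have : 2 ≤ M := by omega
    push_cast [this]; ring
  set ρ : 𝓨 → ℝ := fun a => (μ a + ((M : ℝ) - 2) * π a) / ((M : ℝ) - 1) with hρ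
  have hfun1 : (fun a => (∑ k ∈ A1, q k a) / ((M : ℝ) - 1)) = ρ := by
    funext a
    simp only [hρ]
    congr 1
    rw [← Finset.add_sum_erase _ _ h0A1, hq0]
    congr 1
    have herase : ∀ k ∈ A1.erase 0, q k a = π a := by
      intro k hk
      have hk0 : k ≠ 0 := Finset.ne_of_mem_erase hk
      have hkA1 := Finset.mem_of_mem_erase hk
      have hkA0 : k ∈ A0 := by
        rw [hA0, Finset.mem_sdiff]
        exact ⟨hA1sub hkA1, by simpa using hk0⟩
      rw [hqj k hkA0]
    rw [Finset.sum_congr rfl herase, Finset.sum_const, hcard_erase,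
      nsmul_eq_mul, hcast2]
  have hρprob : IsProb ρ := by
    constructor
    · intro a
      exact div_nonneg (add_nonneg (hμ.1 a) (mul_nonneg hM2.le (hπ.1 a))) hc.le
    · simp only [hρ]
      rw [← Finset.sum_div, Finset.sum_add_distrib, hμ.2, ← Finset.mul_sum, hπ.2]
      field_simp
      ring
  have hρf : FullSupport ρ := fun a =>
    div_pos (add_pos_of_pos_of_nonneg (hμf a) (mul_nonneg hM2.le (hπ.1 a))) hc
  have hμρ : μ ≠ ρ := by
    intro h
    apply hne
    funext a
    have h2a := congrFun h a
    simp only [hρ] at h2a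
    rw [eq_div_iff (ne_of_gt hc)] at h2a
    have hz : ((M : ℝ) - 2) * (μ a - π a) = 0 := by linear_combination h2a
    rcases mul_eq_zero.1 hz with h' | h'
    · exact absurd h' (ne_of_gt hM2)
    · linarith [sub_eq_zero.1 h']
  have hKLμρ : 0 < KL μ ρ := by
    rcases kl_nonneg_and hμ hρprob hρf with ⟨hnn, heq⟩
    rcases eq_or_lt_of_le hnn with h0 | h0
    · exact absurd (heq h0.symm) hμρ
    · exact h0
  have hRHSge : KL μ ρ ≤ ∑ j ∈ A1, KL (q j) ρ := by
    have hs : KL (q 0) ρ ≤ ∑ j ∈ A1, KL (q j) ρ :=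
      Finset.single_le_sum (f := fun j => KL (q j) ρ)
        (fun j hj => kl_nonneg (h1 j (Finset.mem_range.1 (hA1sub hj))) hρprob hρf) h0A1
    rwa [hq0] at hs
  rw [hLHS, hfun1] at h2
  linarith
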